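/- Let m, n ≥ 3 and let G be the cartesian product of the directed cycles of lengths n and m, i.e. the digraph on ZMod n × ZMod m with arcs (i, j) → (i + 1, j) and (i, j) → (i, j + 1). Then the following are equivalent: (i) G is a dextro-nut digraph; (ii) G is a laevo-nut digraph; (iii) G is an ambi-nut digraph; (iv) m·n is even and gcd(m, n) = 1. -/

import Mathlib

open Matrix Finset
open scoped Classical

variable {V : Type*} [Fintype V] [DecidableEq V]
variable {W : Type*} [Fintype W] [DecidableEq W]

/-- Adjacency matrix of a digraph `G` on `V`. -/
noncomputable def adjMat (G : V → V → Prop) : Matrix V V ℝ :=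
  Matrix.of fun u v => if G u v then (1 : ℝ) else 0

/-- The kernel of a digraph. -/
def KerD (G : V → V → Prop) : Set (V → ℝ) := {x | (adjMat G).mulVec x = 0}

/-- The cokernel of a digraph. -/
def CoKerD (G : V → V → Prop) : Set (V → ℝ) := {x | (adjMat G)ᵀ.mulVec x = 0}

/-- A vector is full if it has no zero entries. -/
def Full (x : V → ℝ) : Prop := ∀ v, x v ≠ 0

/-- Dextro-nut digraph: the kernel is one-dimensional, spanned by a full vector. -/
def IsDextroNut (G : V → V → Prop) : Prop :=
  ∃ x ∈ KerD G, Full x ∧ ∀ y ∈ KerD G, ∃ c : ℝ, y = c • x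

/-- Laevo-nut digraph: the cokernel is one-dimensional, spanned by a full vector. -/
def IsLaevoNut (G : V → V → Prop) : Prop :=
  ∃ x ∈ CoKerD G, Full x ∧ ∀ y ∈ CoKerD G, ∃ c : ℝ, y = c • x

/-- Bi-nut digraph: both dextro-nut and laevo-nut. -/
def IsBiNut (G : V → V → Prop) : Prop := IsDextroNut G ∧ IsLaevoNut G

/-- Ambi-nut digraph: one full vector spans both kernel and cokernel. -/
def IsAmbiNut (G : V → V → Prop) : Prop :=
  ∃ x : V → ℝ, Full x ∧ x ∈ KerD G ∧ x ∈ CoKerD G ∧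
    (∀ y ∈ KerD G, ∃ c : ℝ, y = c • x) ∧ (∀ y ∈ CoKerD G, ∃ c : ℝ, y = c • x)

/-- Inter-nut digraph: the intersection of kernel and cokernel is one-dimensional,
spanned by a full vector. -/
def IsInterNut (G : V → V → Prop) : Prop :=
  ∃ x : V → ℝ, Full x ∧ x ∈ KerD G ∩ CoKerD G ∧
    ∀ y ∈ KerD G ∩ CoKerD G, ∃ c : ℝ, y = c • x

/-- Nullity of a digraph: dimension of the kernel of its adjacency matrix. -/
noncomputable def nullityD (G : V → V → Prop) : ℕ :=
  Module.finrank ℝ (LinearMap.ker (adjMat G).mulVecLin)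

/-- The digraph obtained by deleting vertex `v`. -/
def delV (G : V → V → Prop) (v : V) : {u : V // u ≠ v} → {u : V // u ≠ v} → Prop :=
  fun a b => G a.1 b.1

def torus (n m : ℕ) : (ZMod n × ZMod m) → (ZMod n × ZMod m) → Prop :=
  fun p q => (q.1 = p.1 + 1 ∧ q.2 = p.2) ∨ (q.1 = p.1 ∧ q.2 = p.2 + 1)


section TorusAux

lemma sum_pair_aux {α : Type*} [Fintype α] [DecidableEq α] (a b : α) (hab : a ≠ b) (x : α → ℝ)
    (P : α → Prop) (hP : ∀ u, P u ↔ u = a ∨ u = b) :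
    (∑ u, (if P u then (1:ℝ) else 0) * x u) = x a + x b := by
  have h1 : ∀ u, (if P u then (1:ℝ) else 0) * x u = if u ∈ ({a, b} : Finset α) then x u else 0 := by
    intro u
    by_cases h : P u
    · rw [if_pos h, if_pos (by simpa [Finset.mem_insert, Finset.mem_singleton] using (hP u).mp h), one_mul]
    · rw [if_neg h, if_neg (by simpa [Finset.mem_insert, Finset.mem_singleton, hP u] using h), zero_mul]
  rw [Finset.sum_congr rfl (fun u _ => h1 u), Finset.sum_ite_mem, Finset.univ_inter,
    Finset.sum_pair hab]

lemma mem_ker_iff {n m : ℕ} [NeZero n] [NeZero m] (hn : 3 ≤ n) (x : ZMod n × ZMod m → ℝ) :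
    x ∈ KerD (torus n m) ↔
      ∀ p : ZMod n × ZMod m, x (p.1 + 1, p.2) + x (p.1, p.2 + 1) = 0 := by
  haveI : Fact (1 < n) := ⟨by omega⟩
  have key : ∀ p : ZMod n × ZMod m,
      (adjMat (torus n m)).mulVec x p = x (p.1 + 1, p.2) + x (p.1, p.2 + 1) := by
    intro p
    have hab : ((p.1 + 1, p.2) : ZMod n × ZMod m) ≠ (p.1, p.2 + 1) := by
      simp only [ne_eq, Prod.mk.injEq, not_and]
      intro h
      exact absurd (left_eq_add.mp h.symm) one_ne_zero
    have := sum_pair_aux (α := ZMod n × ZMod m) (p.1 + 1, p.2) (p.1, p.2 + 1) hab x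
      (torus n m p) (by
        intro u
        constructor
        · rintro (⟨h1, h2⟩ | ⟨h1, h2⟩)
          · exact Or.inl (Prod.ext h1 h2)
          · exact Or.inr (Prod.ext h1 h2)
        · rintro (rfl | rfl)
          · exact Or.inl ⟨rfl, rfl⟩
          · exact Or.inr ⟨rfl, rfl⟩)
    simpa [Matrix.mulVec, dotProduct, adjMat] using this
  constructor
  · intro h p
    have := congrFun h p
    rw [key p] at this
    simpa using this
  · intro h
    funext p
    rw [key p]
    simpa using h p

lemma mem_coker_iff {n m : ℕ} [NeZero n] [NeZero m] (hn : 3 ≤ n) (x : ZMod n × ZMod m → ℝ) :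
    x ∈ CoKerD (torus n m) ↔
      ∀ p : ZMod n × ZMod m, x (p.1 - 1, p.2) + x (p.1, p.2 - 1) = 0 := by
  haveI : Fact (1 < n) := ⟨by omega⟩
  have key : ∀ p : ZMod n × ZMod m,
      (adjMat (torus n m))ᵀ.mulVec x p = x (p.1 - 1, p.2) + x (p.1, p.2 - 1) := by
    intro p
    have hab : ((p.1 - 1, p.2) : ZMod n × ZMod m) ≠ (p.1, p.2 - 1) := by
      simp only [ne_eq, Prod.mk.injEq, not_and]
      intro h
      exact absurd (by linear_combination -h : (1 : ZMod n) = 0) one_ne_zero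
    have := sum_pair_aux (α := ZMod n × ZMod m) (p.1 - 1, p.2) (p.1, p.2 - 1) hab x
      (fun u => torus n m u p) (by
        intro u
        constructor
        · rintro (⟨h1, h2⟩ | ⟨h1, h2⟩)
          · exact Or.inl (Prod.ext (by rw [h1]; ring) h2.symm)
          · exact Or.inr (Prod.ext h1.symm (by rw [h2]; ring))
        · rintro (rfl | rfl)
          · exact Or.inl ⟨by ring, rfl⟩
          · exact Or.inr ⟨rfl, by ring⟩)
    simpa [Matrix.mulVec, dotProduct, adjMat, Matrix.transpose_apply] using this
  constructor
  · intro h p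
    have := congrFun h p
    rw [key p] at this
    simpa using this
  · intro h
    funext p
    rw [key p]
    simpa using h p

lemma prop_lemma {n m : ℕ} [NeZero n] [NeZero m] (x : ZMod n × ZMod m → ℝ)
    (hx : ∀ p : ZMod n × ZMod m, x (p.1 + 1, p.2) + x (p.1, p.2 + 1) = 0) :
    ∀ (k : ℕ) (p : ZMod n × ZMod m), x (p.1 + k, p.2 - k) = (-1)^k * x p := by
  intro k
  induction k with
  | zero => intro p; simp
  | succ k ih =>
    intro p
    have h := hx (p.1 + k, p.2 - k - 1)
    have h2 : x (p.1 + k + 1, p.2 - k - 1) = -x (p.1 + k, p.2 - k) := by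
      have : p.2 - k - 1 + 1 = p.2 - k := by ring
      rw [this] at h
      linarith [h]
    push_cast
    calc x (p.1 + (k + 1), p.2 - (k + 1)) = x (p.1 + k + 1, p.2 - k - 1) := by ring_nf
      _ = -x (p.1 + k, p.2 - k) := h2
      _ = -((-1)^k * x p) := by rw [ih p]
      _ = (-1)^(k+1) * x p := by ring

lemma parity_helper (k1 k2 : ℕ) (h : (2:ℤ) ∣ (k1 : ℤ) - k2 - 1) :
    ((-1:ℝ))^k1 = -((-1:ℝ))^k2 := by
  have h1 : Even ((k1:ℤ) - (k2 + 1)) := by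
    rw [Int.even_iff]; omega
  rw [Int.even_sub] at h1
  rcases Int.even_or_odd (k1 : ℤ) with he | ho
  · have : Even ((k2:ℤ) + 1) := h1.mp he
    have hk1 : Even k1 := Int.even_coe_nat k1 |>.mp he
    have hk2 : Odd k2 := by
      have : Odd (k2 : ℤ) := by
        rcases Int.even_or_odd (k2:ℤ) with h' | h'
        · exact absurd this (by simpa [Int.even_add_one] using h')
        · exact h'
      exact Int.odd_coe_nat k2 |>.mp this
    rw [hk1.neg_one_pow, hk2.neg_one_pow]; ring
  · have hodd : ¬ Even ((k2:ℤ) + 1) := fun h' => (Int.even_or_odd _).elim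
      (fun he => absurd he (Int.not_even_iff_odd.mpr ho)) (fun _ => by
        rcases Int.even_or_odd (k1:ℤ) with a | a
        · exact absurd a (Int.not_even_iff_odd.mpr ho)
        · exact absurd (h1.mpr h') (Int.not_even_iff_odd.mpr ho))
    have hk2 : Even k2 := by
      have : Even (k2 : ℤ) := by
        rcases Int.even_or_odd (k2:ℤ) with h' | h'
        · exact h'
        · exact absurd (by simpa [Int.even_add_one] using Int.not_even_iff_odd.mpr h') hodd
      exact Int.even_coe_nat k2 |>.mp this
    have hk1 : Odd k1 := Int.odd_coe_nat k1 |>.mp ho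
    rw [hk1.neg_one_pow, hk2.neg_one_pow]

lemma cast_of_modeq {n : ℕ} [NeZero n] (k : ℕ) (i : ZMod n) (h : k ≡ i.val [MOD n]) :
    (k : ZMod n) = i := by
  have := (ZMod.natCast_eq_natCast_iff k i.val n).mpr h
  simpa [ZMod.natCast_val, ZMod.cast_id] using this

lemma crt_exists {n m : ℕ} [NeZero n] [NeZero m] (cop : Nat.Coprime n m)
    (p : ZMod n × ZMod m) : ∃ k : ℕ, (k : ZMod n) = p.1 ∧ (k : ZMod m) = -p.2 := by
  obtain ⟨k, h1, h2⟩ := Nat.chineseRemainder cop p.1.val (-p.2).val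
  exact ⟨k, cast_of_modeq k p.1 h1, cast_of_modeq k (-p.2) h2⟩

lemma two_dvd_of_both {n m : ℕ} (h2 : 2 ∣ m * n) (D : ℤ)
    (hn : (n:ℤ) ∣ D) (hm : (m:ℤ) ∣ D) (cop : Nat.Coprime n m) : (2:ℤ) ∣ D := by
  have hc : IsCoprime (n:ℤ) (m:ℤ) := by
    rw [Int.isCoprime_iff_gcd_eq_one, Int.gcd_natCast_natCast]
    exact cop
  have hnm : ((n*m : ℕ) : ℤ) ∣ D := by
    push_cast
    exact hc.mul_dvd hn hm
  have : (2:ℤ) ∣ ((n*m:ℕ):ℤ) := by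
    exact_mod_cast Int.natCast_dvd_natCast.mpr (show 2 ∣ n * m by rwa [Nat.mul_comm m n] at h2)
  exact this.trans hnm

end TorusAux

theorem stmt1 (n m : ℕ) [NeZero n] [NeZero m] (hn : 3 ≤ n) (hm : 3 ≤ m) :
    (IsDextroNut (torus n m) ↔ IsLaevoNut (torus n m)) ∧
    (IsDextroNut (torus n m) ↔ IsAmbiNut (torus n m)) ∧
    (IsDextroNut (torus n m) ↔ (2 ∣ m * n ∧ Nat.gcd m n = 1)) := by
  haveI : Fact (1 < n) := ⟨by omega⟩
  -- kernel and cokernel coincide for the torus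
  have hkc : KerD (torus n m) = CoKerD (torus n m) := by
    ext x
    rw [mem_ker_iff hn, mem_coker_iff hn]
    constructor
    · intro h p
      have h' := h (p.1 - 1, p.2 - 1)
      simp only at h' ⊢
      have e1 : p.1 - 1 + 1 = p.1 := by ring
      have e2 : p.2 - 1 + 1 = p.2 := by ring
      rw [e1, e2] at h'
      linarith
    · intro h p
      have h' := h (p.1 + 1, p.2 + 1)
      simp only at h' ⊢
      have e1 : p.1 + 1 - 1 = p.1 := by ring
      have e2 : p.2 + 1 - 1 = p.2 := by ring
      rw [e1, e2] at h'
      linarith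
  refine ⟨by unfold IsDextroNut IsLaevoNut; rw [hkc], ?_, ?_⟩
  · constructor
    · rintro ⟨x, hx, hfull, hspan⟩
      exact ⟨x, hfull, hx, hkc ▸ hx, hspan, hkc ▸ hspan⟩
    · rintro ⟨x, hfull, hx, -, hs, -⟩
      exact ⟨x, hx, hfull, hs⟩
  constructor
  · -- Dextro → condition (iv)
    rintro ⟨x, hxker, hfull, hspan⟩
    have hx := (mem_ker_iff hn x).mp hxker
    constructor
    · -- 2 ∣ m * n
      by_contra h2
      have hodd : Odd (m*n) := Nat.odd_iff.mpr (by omega)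
      have hp := prop_lemma x hx (m*n) (0, 0)
      have hzn : ((m*n : ℕ) : ZMod n) = 0 := by push_cast; simp [ZMod.natCast_self]
      have hzm : ((m*n : ℕ) : ZMod m) = 0 := by push_cast; simp [ZMod.natCast_self]
      simp only [hzn, hzm, add_zero, sub_zero, hodd.neg_one_pow] at hp
      have : x (0, 0) = 0 := by linarith
      exact hfull (0, 0) this
    · -- gcd m n = 1
      set P : ZMod n × ZMod m → Prop :=
        fun p => ∃ k : ℤ, p.1 = (k : ZMod n) ∧ p.2 = ((-k : ℤ) : ZMod m) with hPdef
      by_cases hP : P ((1 : ZMod n), (0 : ZMod m))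
      · -- extract the arithmetic consequence
        obtain ⟨k, h1, h2⟩ := hP
        have hn' : (n:ℤ) ∣ k - 1 := by
          have : ((k - 1 : ℤ) : ZMod n) = 0 := by push_cast; rw [← h1]; ring
          exact (ZMod.intCast_zmod_eq_zero_iff_dvd _ _).mp this
        have hm' : (m:ℤ) ∣ k := by
          have : ((k : ℤ) : ZMod m) = 0 := by
            have h2' : ((-k : ℤ) : ZMod m) = 0 := h2.symm
            push_cast at h2' ⊢
            exact neg_eq_zero.mp h2'
          exact (ZMod.intCast_zmod_eq_zero_iff_dvd _ _).mp this
        have d1 : ((Nat.gcd m n : ℕ) : ℤ) ∣ k :=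
          dvd_trans (Int.natCast_dvd_natCast.mpr (Nat.gcd_dvd_left m n)) hm'
        have d2 : ((Nat.gcd m n : ℕ) : ℤ) ∣ k - 1 :=
          dvd_trans (Int.natCast_dvd_natCast.mpr (Nat.gcd_dvd_right m n)) hn'
        have d3 : ((Nat.gcd m n : ℕ) : ℤ) ∣ 1 := by
          have := dvd_sub d1 d2
          simpa using this
        have : Nat.gcd m n ∣ 1 := by exact_mod_cast d3
        exact Nat.dvd_one.mp this
      · -- otherwise build a kernel vector not proportional to x
        exfalso
        set y : ZMod n × ZMod m → ℝ := fun p => if P p then x p else 0 with hydef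
        have hyker : y ∈ KerD (torus n m) := by
          rw [mem_ker_iff hn]
          intro p
          have hiff : P (p.1 + 1, p.2) ↔ P (p.1, p.2 + 1) := by
            constructor
            · rintro ⟨k, h1, h2⟩
              refine ⟨k - 1, ?_, ?_⟩
              · push_cast at h1 ⊢
                linear_combination h1
              · push_cast at h2 ⊢
                linear_combination h2
            · rintro ⟨k, h1, h2⟩
              refine ⟨k + 1, ?_, ?_⟩
              · push_cast at h1 ⊢
                linear_combination h1
              · push_cast at h2 ⊢
                linear_combination h2
          by_cases ha : P (p.1 + 1, p.2)
          · have hb := hiff.mp ha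
            show (if P (p.1 + 1, p.2) then x (p.1 + 1, p.2) else 0) +
              (if P (p.1, p.2 + 1) then x (p.1, p.2 + 1) else 0) = 0
            rw [if_pos ha, if_pos hb]
            exact hx p
          · have hb := fun h => ha (hiff.mpr h)
            show (if P (p.1 + 1, p.2) then x (p.1 + 1, p.2) else 0) +
              (if P (p.1, p.2 + 1) then x (p.1, p.2 + 1) else 0) = 0
            rw [if_neg ha, if_neg hb]
            ring
        obtain ⟨c, hc⟩ := hspan y hyker
        have h00 : P (0, 0) := ⟨0, by simp, by simp⟩
        have e0 : y (0, 0) = x (0, 0) := if_pos h00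
        have e1 : y ((1 : ZMod n), (0 : ZMod m)) = 0 := if_neg hP
        have hc0 := congrFun hc (0, 0)
        have hc1 := congrFun hc ((1 : ZMod n), (0 : ZMod m))
        simp only [Pi.smul_apply, smul_eq_mul] at hc0 hc1
        rw [e0] at hc0
        rw [e1] at hc1
        have hcval : c = 1 := by
          have h00ne := hfull (0, 0)
          have hmm : c * x (0, 0) = 1 * x (0, 0) := by rw [one_mul, ← hc0]
          exact mul_right_cancel₀ h00ne hmm
        rw [hcval, one_mul] at hc1
        exact hfull ((1 : ZMod n), (0 : ZMod m)) hc1.symm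
  · -- condition (iv) → Dextro
    rintro ⟨h2, hg⟩
    have cop : Nat.Coprime n m := (Nat.coprime_comm.mp hg)
    choose K hK1 hK2 using fun p => crt_exists cop p
    set x : ZMod n × ZMod m → ℝ := fun p => (-1 : ℝ)^(K p) with hxdef
    have hxk : ∀ p : ZMod n × ZMod m, x (p.1 + 1, p.2) + x (p.1, p.2 + 1) = 0 := by
      intro p
      have c1n := hK1 (p.1 + 1, p.2)
      have c1m := hK2 (p.1 + 1, p.2)
      have c2n := hK1 (p.1, p.2 + 1)
      have c2m := hK2 (p.1, p.2 + 1)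
      simp only at c1n c1m c2n c2m
      have dn : (n:ℤ) ∣ (K (p.1 + 1, p.2) : ℤ) - (K (p.1, p.2 + 1) : ℤ) - 1 := by
        rw [← ZMod.intCast_zmod_eq_zero_iff_dvd]
        push_cast
        rw [c1n, c2n]
        ring
      have dm : (m:ℤ) ∣ (K (p.1 + 1, p.2) : ℤ) - (K (p.1, p.2 + 1) : ℤ) - 1 := by
        rw [← ZMod.intCast_zmod_eq_zero_iff_dvd]
        push_cast
        rw [c1m, c2m]
        ring
      have hpar := parity_helper _ _ (two_dvd_of_both h2 _ dn dm cop)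
      show (-1 : ℝ)^(K (p.1 + 1, p.2)) + (-1 : ℝ)^(K (p.1, p.2 + 1)) = 0
      rw [hpar]
      ring
    refine ⟨x, (mem_ker_iff hn x).mpr hxk, fun p => pow_ne_zero _ (by norm_num), ?_⟩
    intro y hy
    have hy' := (mem_ker_iff hn y).mp hy
    refine ⟨y (0, 0), ?_⟩
    funext p
    have hp := prop_lemma y hy' (K p) (0, 0)
    simp only at hp
    have e1 : (0 : ZMod n) + (K p : ZMod n) = p.1 := by rw [zero_add, hK1 p]
    have e2 : (0 : ZMod m) - (K p : ZMod m) = p.2 := by rw [zero_sub, hK2 p, neg_neg]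
    rw [e1, e2] at hp
    show y p = y (0, 0) * x p
    rw [hp]
    show (-1 : ℝ)^(K p) * y (0, 0) = y (0, 0) * (-1 : ℝ)^(K p)
    ring
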